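/- arXiv:1809.06979 — 5 statements merged into one kernel-verified Lean document; each statement's English description precedes it below -/
import Mathlib

section
/- The third-order Jacobsthal numbers satisfy the Binet-style formula J_n = (1/7)(2^{n+1} - V_n), where V_n is the periodic sequence with V_n = 2 if n ≡ 0 (mod 3), V_n = -3 if n ≡ 1 (mod 3), and V_n = 1 if n ≡ 2 (mod 3). -/
def J3 : ℕ → ℤ
  | 0 => 0
  | 1 => 1
  | 2 => 1
  | (n + 3) => J3 (n + 2) + J3 (n + 1) + 2 * J3 n

def V3 (n : ℕ) : ℤ := if n % 3 = 0 then 2 else if n % 3 = 1 then -3 else 1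

theorem binet_third_order_jacobsthal (n : ℕ) :
    7 * J3 n = 2 ^ (n + 1) - V3 n := by
  induction n using Nat.strong_induction_on with
  | _ n ih =>
    match n with
    | 0 => decide
    | 1 => decide
    | 2 => decide
    | (m + 3) =>
      have h0 := ih m (by omega)
      have h1 := ih (m + 1) (by omega)
      have h2 := ih (m + 2) (by omega)
      have hsum : V3 (m + 2) + V3 (m + 1) + 2 * V3 m = V3 (m + 3) := by
        have := Nat.mod_lt m (show 0 < 3 by norm_num)
        unfold V3
        interval_cases h : m % 3 <;> simp [Nat.add_mod, h]
      have hp : (2 : ℤ) ^ (m + 3 + 1) = 2 ^ (m + 2 + 1) + 2 ^ (m + 1 + 1) + 2 * 2 ^ (m + 1) := by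
        ring
      show 7 * (J3 (m + 2) + J3 (m + 1) + 2 * J3 m) = 2 ^ (m + 3 + 1) - V3 (m + 3)
      rw [hp, ← hsum]; linarith
end

section
/- The sum of the first n+1 third-order Jacobsthal numbers satisfies: ∑_{s=0}^{n} J_s = (1/3)(J_{n+2} + 2·J_n - 1). Equivalently, 3·∑_{s=0}^{n} J_s = J_{n+2} + 2·J_n - 1. -/
theorem sum_third_order_jacobsthal (n : ℕ) :
    3 * ∑ s ∈ Finset.range (n + 1), J3 s = J3 (n + 2) + 2 * J3 n - 1 := by
  induction n with
  | zero => simp [J3]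
  | succ k ih =>
    rw [Finset.sum_range_succ, mul_add, ih, show k + 1 + 2 = k + 3 from rfl, J3]
    ring
end

section
/- The sum of the first n+1 third-order Jacobsthal numbers equals J_{n+1} - 1 if n ≡ 0 (mod 3), and equals J_{n+1} otherwise. -/
def e3 (n : ℕ) : ℤ := if n % 3 = 0 then -1 else if n % 3 = 2 then 1 else 0

lemma e3_rec (k : ℕ) : e3 (k + 2) = -e3 k - e3 (k + 1) := by
  have h3 : k % 3 = 0 ∨ k % 3 = 1 ∨ k % 3 = 2 := by omega
  rcases h3 with h | h | h <;>
    simp [e3, Nat.add_mod, h]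

lemma aux (n : ℕ) : J3 (n + 2) = 2 * J3 (n + 1) + e3 n ∧
    J3 (n + 3) = 2 * J3 (n + 2) + e3 (n + 1) := by
  induction n with
  | zero => refine ⟨?_, ?_⟩ <;> simp [J3, e3]
  | succ k ih =>
    obtain ⟨h1, h2⟩ := ih
    refine ⟨h2, ?_⟩
    have h4 : J3 (k + 4) = J3 (k + 3) + J3 (k + 2) + 2 * J3 (k + 1) := rfl
    have he := e3_rec k
    show J3 (k + 4) = 2 * J3 (k + 3) + e3 (k + 2)
    rw [h4, he]; linarith

theorem sum_third_order_jacobsthal_cases (n : ℕ) :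
    ∑ s ∈ Finset.range (n + 1), J3 s =
      if n % 3 = 0 then J3 (n + 1) - 1 else J3 (n + 1) := by
  induction n with
  | zero => simp [J3]
  | succ k ih =>
    rw [Finset.sum_range_succ, ih]
    have h := (aux k).1
    have h3 : k % 3 = 0 ∨ k % 3 = 1 ∨ k % 3 = 2 := by omega
    rcases h3 with hk | hk | hk <;>
      [ (have hk1 : (k + 1) % 3 = 1 := by omega);
        (have hk1 : (k + 1) % 3 = 2 := by omega);
        (have hk1 : (k + 1) % 3 = 0 := by omega)] <;>
      simp only [e3, hk, hk1] at h ⊢ <;> norm_num at h ⊢ <;> linarith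
end

section
/- For the bicomplex third-order Jacobsthal quaternion BC_n, the sum of the first n+1 terms satisfies: ∑_{s=0}^{n} BC_s = S(n) + i·S(n+1) + j·(S(n+2) - 1) + ij·(S(n+3) - 2), where S(m) = (1/3)(J_{m+2} + 2J_m - 1) is the sum of the first m+1 third-order Jacobsthal numbers. -/
/-- The bicomplex third-order Jacobsthal quaternion, as a 4-tuple. -/
def BCJ (n : ℕ) : ℤ × ℤ × ℤ × ℤ := (J3 n, J3 (n + 1), J3 (n + 2), J3 (n + 3))

/-- Sum of the first `m + 1` third-order Jacobsthal numbers. -/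
def S3 (m : ℕ) : ℤ := ∑ s ∈ Finset.range (m + 1), J3 s

theorem sum_BCJ (n : ℕ) :
    ∑ s ∈ Finset.range (n + 1), BCJ s =
      (S3 n, S3 (n + 1), S3 (n + 2) - 1, S3 (n + 3) - 2) := by
  induction n with
  | zero => simp [Finset.sum_range_succ, BCJ, S3, J3]
  | succ k ih =>
    rw [Finset.sum_range_succ, ih]
    have h : ∀ m : ℕ, S3 (m + 1) = S3 m + J3 (m + 1) := fun m => by
      simp [S3, Finset.sum_range_succ]
    simp only [BCJ, Prod.mk_add_mk, Prod.mk.injEq, h]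
    refine ⟨trivial, trivial, by ring, by ring⟩
end

section
/- If n ≡ 0 (mod 3), then ∑_{s=0}^{n} BC_s = (J_{n+1} - 1) + i·J_{n+2} + j·(J_{n+3} - 1) + ij·(J_{n+4} - 3); if n ≡ 1 (mod 3), it equals J_{n+1} + i·J_{n+2} + j·(J_{n+3} - 2) + ij·(J_{n+4} - 2); if n ≡ 2 (mod 3), it equals J_{n+1} + i·(J_{n+2} - 1) + j·(J_{n+3} - 1) + ij·(J_{n+4} - 2). -/
lemma J3_add3 (n : ℕ) : J3 (n + 3) = J3 (n + 2) + J3 (n + 1) + 2 * J3 n := by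
  rw [J3]

theorem sum_BCJ_cases (n : ℕ) :
    (n % 3 = 0 → ∑ s ∈ Finset.range (n + 1), BCJ s =
      (J3 (n + 1) - 1, J3 (n + 2), J3 (n + 3) - 1, J3 (n + 4) - 3)) ∧
    (n % 3 = 1 → ∑ s ∈ Finset.range (n + 1), BCJ s =
      (J3 (n + 1), J3 (n + 2), J3 (n + 3) - 2, J3 (n + 4) - 2)) ∧
    (n % 3 = 2 → ∑ s ∈ Finset.range (n + 1), BCJ s =
      (J3 (n + 1), J3 (n + 2) - 1, J3 (n + 3) - 1, J3 (n + 4) - 2)) := by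
  induction n using Nat.strong_induction_on with
  | _ n ih =>
    match n with
    | 0 =>
      refine ⟨fun _ => ?_, fun h => by omega, fun h => by omega⟩
      simp [Finset.sum_range_succ, BCJ]
      norm_num [show (4:ℕ) = 1 + 3 from rfl, J3_add3, J3]
    | 1 =>
      refine ⟨fun h => by omega, fun _ => ?_, fun h => by omega⟩
      simp [Finset.sum_range_succ, BCJ, Prod.ext_iff]
      norm_num [show (5:ℕ) = 2 + 3 from rfl, show (4:ℕ) = 1 + 3 from rfl,
        show (3:ℕ) = 0 + 3 from rfl, J3_add3, J3]
    | 2 =>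
      refine ⟨fun h => by omega, fun h => by omega, fun _ => ?_⟩
      simp [Finset.sum_range_succ, BCJ, Prod.ext_iff]
      norm_num [show (6:ℕ) = 3 + 3 from rfl, show (5:ℕ) = 2 + 3 from rfl,
        show (4:ℕ) = 1 + 3 from rfl, show (3:ℕ) = 0 + 3 from rfl, J3_add3, J3]
    | (m + 3) =>
      obtain ⟨h0, h1, h2⟩ := ih m (by omega)
      have key : ∑ s ∈ Finset.range (m + 3 + 1), BCJ s =
          ∑ s ∈ Finset.range (m + 1), BCJ s + BCJ (m + 1) + BCJ (m + 2) + BCJ (m + 3) := by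
        rw [Finset.sum_range_succ, Finset.sum_range_succ, Finset.sum_range_succ]
      have e4 : J3 (m + 4) = J3 (m + 3) + J3 (m + 2) + 2 * J3 (m + 1) := J3_add3 (m + 1)
      have e5 : J3 (m + 5) = J3 (m + 4) + J3 (m + 3) + 2 * J3 (m + 2) := J3_add3 (m + 2)
      have e6 : J3 (m + 6) = J3 (m + 5) + J3 (m + 4) + 2 * J3 (m + 3) := J3_add3 (m + 3)
      have e7 : J3 (m + 7) = J3 (m + 6) + J3 (m + 5) + 2 * J3 (m + 4) := J3_add3 (m + 4)
      have e3 : J3 (m + 3) = J3 (m + 2) + J3 (m + 1) + 2 * J3 m := J3_add3 m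
      refine ⟨fun h => ?_, fun h => ?_, fun h => ?_⟩
      · rw [key, h0 (by omega), BCJ, BCJ, BCJ, Prod.ext_iff, Prod.ext_iff, Prod.ext_iff]
        refine ⟨by simp; linarith, by simp; linarith, by simp; linarith, by simp; linarith⟩
      · rw [key, h1 (by omega), BCJ, BCJ, BCJ, Prod.ext_iff, Prod.ext_iff, Prod.ext_iff]
        refine ⟨by simp; linarith, by simp; linarith, by simp; linarith, by simp; linarith⟩
      · rw [key, h2 (by omega), BCJ, BCJ, BCJ, Prod.ext_iff, Prod.ext_iff, Prod.ext_iff]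
        refine ⟨by simp; linarith, by simp; linarith, by simp; linarith, by simp; linarith⟩
end
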